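/- Lazarevic's inequality: for all real y ≠ 0 and all real p ≥ 3, cosh(y) ≤ (sinh(y)/y)^p. -/

import Mathlib

private lemma laz_key (y w : ℝ) (hy : 0 < y)
    (hw : 1 + 2*y + 2*y^2 + 4/3*y^3 + 2/3*y^4 + 4/15*y^5 ≤ w) :
    4*y^3*w*(w+1) ≤ (w-1)^3 := by
  set Q : ℝ := 1 + 2*y + 2*y^2 + 4/3*y^3 + 2/3*y^4 + 4/15*y^5 with hQ
  have hy' := hy.le
  have hA : 4*y^3*(2*Q+1) ≤ 3*(Q-1)^2 := by
    rw [hQ]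
    nlinarith [pow_nonneg hy' 2, pow_nonneg hy' 3, pow_nonneg hy' 4, pow_nonneg hy' 5,
      pow_nonneg hy' 6, pow_nonneg hy' 7, pow_nonneg hy' 8, pow_nonneg hy' 9, pow_nonneg hy' 10]
  have hB : 4*y^3*Q*(Q+1) ≤ (Q-1)^3 := by
    rw [hQ]
    nlinarith [pow_nonneg hy' 7, pow_nonneg hy' 8, pow_nonneg hy' 9, pow_nonneg hy' 10,
      pow_nonneg hy' 11, pow_nonneg hy' 12, pow_nonneg hy' 13, pow_nonneg hy' 14,
      pow_nonneg hy' 15]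
  have hQ3 : 3 + 4*y^3 ≤ 3*Q := by
    rw [hQ]; nlinarith [pow_nonneg hy' 2, pow_nonneg hy' 4, pow_nonneg hy' 5]
  have hwQ : 0 ≤ w - Q := sub_nonneg.2 hw
  have hbr : 0 ≤ w^2 + w*Q + Q^2 - 3*(w+Q) + 3 - 4*y^3*(w+Q+1) := by
    nlinarith [mul_nonneg hwQ (by nlinarith : (0:ℝ) ≤ w + 2*Q - 3 - 4*y^3), hA]
  nlinarith [mul_nonneg hwQ hbr, hB]

private lemma laz_pos (y : ℝ) (hy : 0 < y) : Real.cosh y ≤ (Real.sinh y / y) ^ (3:ℕ) := by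
  have hE : 0 < Real.exp y := Real.exp_pos y
  have hsum := Real.sum_le_exp_of_nonneg (by positivity : (0:ℝ) ≤ 2*y) 6
  have hw : 1 + 2*y + 2*y^2 + 4/3*y^3 + 2/3*y^4 + 4/15*y^5 ≤ Real.exp y * Real.exp y := by
    have heq : ∑ i ∈ Finset.range 6, (2*y) ^ i / (i).factorial
        = 1 + 2*y + 2*y^2 + 4/3*y^3 + 2/3*y^4 + 4/15*y^5 := by
      simp [Finset.sum_range_succ, Nat.factorial]
      ring
    rw [heq] at hsum
    have : Real.exp (2*y) = Real.exp y * Real.exp y := by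
      rw [← Real.exp_add]; ring_nf
    linarith [this ▸ hsum]
  have key := laz_key y (Real.exp y * Real.exp y) hy hw
  set E := Real.exp y with hEdef
  have hEne : E ≠ 0 := hE.ne'
  have hc : Real.cosh y = (E*E+1)/(2*E) := by
    rw [Real.cosh_eq, Real.exp_neg, ← hEdef, eq_div_iff (by positivity : (2:ℝ)*E ≠ 0)]
    field_simp
  have hs : Real.sinh y = (E*E-1)/(2*E) := by
    rw [Real.sinh_eq, Real.exp_neg, ← hEdef, eq_div_iff (by positivity : (2:ℝ)*E ≠ 0)]
    field_simp
  have key2 := mul_le_mul_of_nonneg_left key (le_of_lt (by positivity : (0:ℝ) < 2*E))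
  have goal' : (E*E+1)/(2*E) * y^3 ≤ ((E*E-1)/(2*E))^3 := by
    rw [div_pow, div_mul_eq_mul_div, div_le_div_iff₀ (by positivity) (by positivity)]
    nlinarith [key2]
  rw [hc, hs, div_pow, le_div_iff₀ (pow_pos hy 3)]
  exact goal'

private lemma laz_cube (y : ℝ) (hy : y ≠ 0) : Real.cosh y ≤ (Real.sinh y / y) ^ (3:ℕ) := by
  rcases hy.lt_or_gt with h | h
  · have := laz_pos (-y) (by linarith)
    simpa [Real.sinh_neg, Real.cosh_neg, neg_div_neg_eq] using this
  · exact laz_pos y h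

private lemma laz_one_le (y : ℝ) (hy : y ≠ 0) : 1 ≤ Real.sinh y / y := by
  rcases hy.lt_or_gt with h | h
  · have h1 : -y < Real.sinh (-y) := Real.self_lt_sinh_iff.2 (by linarith)
    rw [Real.sinh_neg] at h1
    rw [le_div_iff_of_neg h]
    linarith
  · have h1 : y < Real.sinh y := Real.self_lt_sinh_iff.2 h
    rw [le_div_iff₀ h]
    linarith

theorem stmt_17 (y p : ℝ) (hy : y ≠ 0) (hp : 3 ≤ p) :
    Real.cosh y ≤ (Real.sinh y / y) ^ p := by
  have h1 := laz_one_le y hy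
  calc Real.cosh y ≤ (Real.sinh y / y) ^ (3:ℕ) := laz_cube y hy
    _ = (Real.sinh y / y) ^ ((3:ℕ):ℝ) := (Real.rpow_natCast _ 3).symm
    _ ≤ (Real.sinh y / y) ^ p := Real.rpow_le_rpow_of_exponent_le h1 (by exact_mod_cast hp)
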